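/- Under the HDeePC transformation assumptions (A_c = A_y C_u, A_y C_f = 0, A_y D_u = 0), the sequence x_κ generated by the model recursion x_κ(k+1) = A_y y_u(k) + A_κ x_κ(k) + B_κ u(k) with x_κ(0) = x_{κ,ini}, where y_u(k) is the true output of the full system trajectory starting from (x_{u,ini}, x_{κ,ini}) under input u, coincides for all k with the true known-state trajectory x_κ(k) of the full system. -/
import Mathlib


open Matrix

/-- The model recursion driven by the true unknown outputs reproduces the true
known-state trajectory of the full system. -/
theorem model_recursion_reproduces_known_state (nu nk pu m : ℕ)
    (Au : Matrix (Fin nu) (Fin nu) ℝ) (Af : Matrix (Fin nu) (Fin nk) ℝ)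
    (Ac : Matrix (Fin nk) (Fin nu) ℝ) (Ak : Matrix (Fin nk) (Fin nk) ℝ)
    (Bu : Matrix (Fin nu) (Fin m) ℝ) (Bk : Matrix (Fin nk) (Fin m) ℝ)
    (Cu : Matrix (Fin pu) (Fin nu) ℝ) (Cf : Matrix (Fin pu) (Fin nk) ℝ)
    (Du : Matrix (Fin pu) (Fin m) ℝ) (Ay : Matrix (Fin nk) (Fin pu) ℝ)
    (hAc : Ac = Ay * Cu) (hACf : Ay * Cf = 0) (hADu : Ay * Du = 0)
    (xu : ℕ → Fin nu → ℝ) (xk : ℕ → Fin nk → ℝ) (u : ℕ → Fin m → ℝ)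
    (yu : ℕ → Fin pu → ℝ) (z : ℕ → Fin nk → ℝ)
    (hxu : ∀ k, xu (k + 1) = Au.mulVec (xu k) + Af.mulVec (xk k) + Bu.mulVec (u k))
    (hxk : ∀ k, xk (k + 1) = Ac.mulVec (xu k) + Ak.mulVec (xk k) + Bk.mulVec (u k))
    (hyu : ∀ k, yu k = Cu.mulVec (xu k) + Cf.mulVec (xk k) + Du.mulVec (u k))
    (hz0 : z 0 = xk 0)
    (hz : ∀ k, z (k + 1) = Ay.mulVec (yu k) + Ak.mulVec (z k) + Bk.mulVec (u k)) :
    ∀ k, z k = xk k := by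
  intro k
  induction k with
  | zero => exact hz0
  | succ k ih =>
    rw [hz, hxk, ih, hyu, hAc]
    simp only [Matrix.mulVec_add, Matrix.mulVec_mulVec, hACf, hADu,
      Matrix.zero_mulVec, add_zero]
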